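/- Every connected finite simple graph G that is neither a complete graph nor an odd cycle satisfies χ(G) ≤ Δ(G) (Brooks' Theorem, standard form). -/

import Mathlib

set_option linter.unusedSectionVars false

open SimpleGraph

namespace BrooksAux

variable {V : Type*} {G : SimpleGraph V}

/-- Reflexive-transitive reachability within a vertex set `s` (only the endpoint side of each
step is required to be in `s`; the start vertex need not be). -/
def RT (G : SimpleGraph V) (s : Set V) : V → V → Prop :=
  Relation.ReflTransGen (fun x y => G.Adj x y ∧ y ∈ s)

namespace RT

variable {s t : Set V} {x y z : V}

lemma refl : RT G s x x := Relation.ReflTransGen.refl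

lemma single (h : G.Adj x y) (hy : y ∈ s) : RT G s x y :=
  Relation.ReflTransGen.single ⟨h, hy⟩

lemma trans (h1 : RT G s x y) (h2 : RT G s y z) : RT G s x z :=
  Relation.ReflTransGen.trans h1 h2

lemma tail (h1 : RT G s x y) (h : G.Adj y z) (hz : z ∈ s) : RT G s x z :=
  Relation.ReflTransGen.tail h1 ⟨h, hz⟩

lemma head (h : G.Adj x y) (hy : y ∈ s) (h1 : RT G s y z) : RT G s x z :=
  Relation.ReflTransGen.head ⟨h, hy⟩ h1

lemma mono (hst : s ⊆ t) (h : RT G s x y) : RT G t x y :=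
  Relation.ReflTransGen.mono (fun _ _ hab => ⟨hab.1, hst hab.2⟩) x y h

lemma mem_of_mem (hx : x ∈ s) (h : RT G s x y) : y ∈ s := by
  cases h with
  | refl => exact hx
  | tail _ h' => exact h'.2

lemma symm (hx : x ∈ s) (h : RT G s x y) : RT G s y x := by
  induction h with
  | refl => exact refl
  | @tail b c h1 h2 ih => exact head h2.1.symm (mem_of_mem hx h1) ih

lemma closure {U : Set V} (h : RT G s x y) (hx : x ∈ U)
    (hcl : ∀ u ∈ U, ∀ z, G.Adj u z → z ∈ s → z ∈ U) : y ∈ U := by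
  induction h with
  | refl => exact hx
  | @tail b c h1 h2 ih => exact hcl b ih c h2.1 h2.2

lemma restrict {U : Set V} (h : RT G s x y) (hx : x ∈ U)
    (hcl : ∀ u ∈ U, ∀ z, G.Adj u z → z ∈ s → z ∈ U) : RT G (s ∩ U) x y := by
  induction h with
  | refl => exact refl
  | @tail b c h1 h2 ih =>
      exact tail ih h2.1 ⟨h2.2, hcl b (closure h1 hx hcl) c h2.1 h2.2⟩

end RT

/-- `s` is connected (as a vertex set of `G`). -/
def Conn (G : SimpleGraph V) (s : Set V) : Prop :=
  ∀ ⦃x⦄, x ∈ s → ∀ ⦃y⦄, y ∈ s → RT G s x y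

lemma Walk.rt {x y : V} (p : G.Walk x y) : RT G Set.univ x y := by
  induction p with
  | nil => exact RT.refl
  | cons h _ ih => exact RT.head h (Set.mem_univ _) ih

lemma Connected.conn (h : G.Connected) : Conn G Set.univ := by
  intro x _ y _
  exact Walk.rt (h x y).some

/-- From a connected set `s`, any `x ≠ c` in `s` can reach a neighbor of `c` avoiding `c`. -/
lemma exists_adj_of_conn {s : Set V} {c x : V} (hconn : Conn G s) (hc : c ∈ s) (hx : x ∈ s)
    (hxc : x ≠ c) : ∃ y, RT G (s \ {c}) x y ∧ G.Adj y c := by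
  have h : RT G s x c := hconn hx hc
  induction h using Relation.ReflTransGen.head_induction_on with
  | refl => exact absurd rfl hxc
  | head h' hrt ih =>
      rename_i a b
      by_cases hbc : b = c
      · exact ⟨a, RT.refl, hbc ▸ h'.1⟩
      · obtain ⟨y, hy1, hy2⟩ := ih h'.2 hbc
        exact ⟨y, RT.head h'.1 ⟨h'.2, hbc⟩ hy1, hy2⟩

/-- The connected component of `x` inside the vertex set `s`. -/
def compOf (G : SimpleGraph V) (s : Set V) (x : V) : Set V := {y | y ∈ s ∧ RT G s x y}

namespace compOf

variable {s : Set V} {x y u z : V}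

lemma subset : compOf G s x ⊆ s := fun _ h => h.1

lemma self_mem (hx : x ∈ s) : x ∈ compOf G s x := ⟨hx, RT.refl⟩

lemma rt_of_mem (h : y ∈ compOf G s x) : RT G s x y := h.2

lemma closed (h : u ∈ compOf G s x) (ha : G.Adj u z) (hz : z ∈ s) : z ∈ compOf G s x :=
  ⟨hz, RT.tail h.2 ha hz⟩

lemma eq_of_mem (hx : x ∈ s) (hy : y ∈ compOf G s x) : compOf G s y = compOf G s x := by
  ext z
  constructor
  · rintro ⟨hz, hrt⟩
    exact ⟨hz, RT.trans hy.2 hrt⟩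
  · rintro ⟨hz, hrt⟩
    exact ⟨hz, RT.trans (RT.symm hx hy.2) hrt⟩

lemma rt_mem (hx : x ∈ s) (hu : u ∈ compOf G s x) (hv : z ∈ compOf G s x) : RT G s u z :=
  RT.trans (RT.symm hx hu.2) hv.2

/-- Chains within `s` starting in a component stay in that component. -/
lemma rt_within (hx : x ∈ s) (hy : y ∈ compOf G s x) : RT G (compOf G s x) x y := by
  have := RT.restrict hy.2 (self_mem hx) (fun u hu z ha hz => closed hu ha hz)
  have h2 : s ∩ compOf G s x = compOf G s x := Set.inter_eq_self_of_subset_right subset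
  rwa [h2] at this

end compOf

/-- Removing a whole component hanging off `c` keeps the rest connected. -/
lemma conn_sdiff_compOf {s : Set V} {c x0 : V} (hconn : Conn G s) (hc : c ∈ s)
    (hx0 : x0 ∈ s \ {c}) : Conn G (s \ compOf G (s \ {c}) x0) := by
  set C := compOf G (s \ {c}) x0 with hC
  have hcC : c ∉ C := fun h => (compOf.subset h).2 rfl
  have hcmem : c ∈ s \ C := ⟨hc, hcC⟩
  have H : ∀ z ∈ s \ C, RT G (s \ C) z c := by
    intro z hz
    by_cases hzc : z = c
    · exact hzc ▸ RT.refl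
    · obtain ⟨y, hy1, hy2⟩ := exists_adj_of_conn hconn hc hz.1 hzc
      have hzs : z ∈ s \ {c} := ⟨hz.1, hzc⟩
      have hdisj : ∀ w, w ∈ compOf G (s \ {c}) z → w ∉ C := by
        intro w hw hwC
        have e1 := compOf.eq_of_mem hzs hw
        have e2 := compOf.eq_of_mem hx0 hwC
        exact hz.2 (by rw [hC, ← e2, e1]; exact compOf.self_mem hzs)
      have hyz : RT G ((s \ {c}) ∩ compOf G (s \ {c}) z) z y :=
        RT.restrict hy1 (compOf.self_mem hzs) (fun u hu w ha hw => compOf.closed hu ha hw)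
      have hmono : ((s \ {c}) ∩ compOf G (s \ {c}) z) ⊆ s \ C := by
        rintro w ⟨hw1, hw2⟩
        exact ⟨hw1.1, hdisj w hw2⟩
      exact RT.tail (RT.mono hmono hyz) hy2 hcmem
  intro a ha b hb
  exact RT.trans (H a ha) (RT.symm hb (H b hb))


section Greedy

variable [Fintype V] [DecidableEq V] [DecidableRel G.Adj]

lemma exists_unused (k : ℕ) (u : Finset ℕ) (h : u.card < k) :
    ∃ m, m < k ∧ m ∉ u := by
  have hns : ¬ (Finset.range k ⊆ u) := fun hsub => by
    have := Finset.card_le_card hsub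
    rw [Finset.card_range] at this
    omega
  obtain ⟨m, hm1, hm2⟩ := Finset.not_subset.mp hns
  exact ⟨m, Finset.mem_range.mp hm1, hm2⟩

lemma greedyA (k : ℕ) (t : Finset V)
    (H : ∀ s ⊆ t, s.Nonempty → ∃ v ∈ s, ((G.neighborFinset v) ∩ s).card < k) :
    ∃ c : V → ℕ, (∀ v ∈ t, c v < k) ∧ ∀ u ∈ t, ∀ v ∈ t, G.Adj u v → c u ≠ c v := by
  induction t using Finset.strongInduction with
  | _ t ih =>

  rcases t.eq_empty_or_nonempty with rfl | hne
  · exact ⟨fun _ => 0, by simp, by simp⟩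
  obtain ⟨v, hv, hcard⟩ := H t Finset.Subset.rfl hne
  obtain ⟨c, hc1, hc2⟩ := ih (t.erase v) (Finset.erase_ssubset hv)
    (fun s hs hsne => H s (hs.trans (Finset.erase_subset _ _)) hsne)
  set used := (G.neighborFinset v ∩ t.erase v).image c with hused_def
  have hused : used.card < k := by
    refine lt_of_le_of_lt (Finset.card_image_le.trans (Finset.card_le_card ?_)) hcard
    exact Finset.inter_subset_inter Finset.Subset.rfl (Finset.erase_subset _ _)
  obtain ⟨m, hm1, hm2⟩ := exists_unused k used hused
  refine ⟨Function.update c v m, ?_, ?_⟩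
  · intro u hu
    by_cases h : u = v
    · subst h; simpa using hm1
    · rw [Function.update_of_ne h]
      exact hc1 u (Finset.mem_erase.mpr ⟨h, hu⟩)
  · intro x hx y hy hadj
    have hxy : x ≠ y := hadj.ne
    by_cases h1 : x = v
    · subst h1
      have h2 : y ≠ x := hxy.symm
      rw [Function.update_self, Function.update_of_ne h2]
      intro heq
      exact hm2 (heq ▸ Finset.mem_image_of_mem c
        (Finset.mem_inter.mpr ⟨(G.mem_neighborFinset _ _).mpr hadj, Finset.mem_erase.mpr ⟨h2, hy⟩⟩))
    · by_cases h2 : y = v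
      · subst h2
        rw [Function.update_self, Function.update_of_ne h1]
        intro heq
        exact hm2 (heq ▸ Finset.mem_image_of_mem c
          (Finset.mem_inter.mpr ⟨(G.mem_neighborFinset _ _).mpr hadj.symm,
            Finset.mem_erase.mpr ⟨h1, hx⟩⟩))
      · rw [Function.update_of_ne h1, Function.update_of_ne h2]
        exact hc2 x (Finset.mem_erase.mpr ⟨h1, hx⟩) y (Finset.mem_erase.mpr ⟨h2, hy⟩) hadj

lemma greedyB (k : ℕ) (hk : 0 < k) (a b : V) (hab : a ≠ b) (hnadj : ¬G.Adj a b)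
    (H : ∀ s : Finset V, a ∈ s → b ∈ s → (∃ x ∈ s, x ≠ a ∧ x ≠ b) →
      ∃ v ∈ s, v ≠ a ∧ v ≠ b ∧ (((G.neighborFinset v) ∩ s).card < k ∨
        (G.Adj v a ∧ G.Adj v b ∧ ((G.neighborFinset v) ∩ s).card ≤ k))) :
    ∀ s : Finset V, a ∈ s → b ∈ s →
      ∃ c : V → ℕ, (∀ v ∈ s, c v < k) ∧ (∀ u ∈ s, ∀ v ∈ s, G.Adj u v → c u ≠ c v) ∧ c a = c b := by
  intro s
  induction s using Finset.strongInduction with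
  | _ s ih =>
  intro has hbs
  by_cases hthird : ∃ x ∈ s, x ≠ a ∧ x ≠ b
  · obtain ⟨v, hv, hva, hvb, hcase⟩ := H s has hbs hthird
    obtain ⟨c, hc1, hc2, hc3⟩ := ih (s.erase v) (Finset.erase_ssubset hv)
      (Finset.mem_erase.mpr ⟨hva.symm, has⟩) (Finset.mem_erase.mpr ⟨hvb.symm, hbs⟩)
    set X := G.neighborFinset v ∩ s.erase v with hX
    have hXeq : X = G.neighborFinset v ∩ s := by
      rw [hX]
      ext w
      simp only [Finset.mem_inter, Finset.mem_erase, G.mem_neighborFinset]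
      constructor
      · rintro ⟨h1, _, h3⟩; exact ⟨h1, h3⟩
      · rintro ⟨h1, h2⟩; exact ⟨h1, fun hwv => G.irrefl (hwv ▸ h1), h2⟩
    have hused : (X.image c).card < k := by
      rcases hcase with hlt | ⟨hadja, hadjb, hle⟩
      · exact lt_of_le_of_lt Finset.card_image_le (by rwa [hXeq])
      · -- a and b both belong to X and get the same color, so the image is small
        have haX : a ∈ X := Finset.mem_inter.mpr ⟨(G.mem_neighborFinset _ _).mpr hadja,
          Finset.mem_erase.mpr ⟨hva.symm, has⟩⟩
        have hbX : b ∈ X := Finset.mem_inter.mpr ⟨(G.mem_neighborFinset _ _).mpr hadjb,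
          Finset.mem_erase.mpr ⟨hvb.symm, hbs⟩⟩
        have himg : X.image c = (X.erase b).image c := by
          apply Finset.Subset.antisymm
          · intro m hm
            obtain ⟨w, hw, hwm⟩ := Finset.mem_image.mp hm
            by_cases hwb : w = b
            · subst hwb
              exact Finset.mem_image.mpr ⟨a, Finset.mem_erase.mpr ⟨hab, haX⟩, by rw [← hwm, hc3]⟩
            · exact Finset.mem_image.mpr ⟨w, Finset.mem_erase.mpr ⟨hwb, hw⟩, hwm⟩
          · exact Finset.image_subset_image (Finset.erase_subset _ _)
        rw [himg]
        calc ((X.erase b).image c).card ≤ (X.erase b).card := Finset.card_image_le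
          _ < X.card := Finset.card_erase_lt_of_mem hbX
          _ ≤ k := by rwa [hXeq]
    obtain ⟨m, hm1, hm2⟩ := exists_unused k _ hused
    refine ⟨Function.update c v m, ?_, ?_, ?_⟩
    · intro u hu
      by_cases h : u = v
      · subst h; simpa using hm1
      · rw [Function.update_of_ne h]
        exact hc1 u (Finset.mem_erase.mpr ⟨h, hu⟩)
    · intro x hx y hy hadj
      by_cases h1 : x = v
      · subst h1
        have h2 : y ≠ x := hadj.ne.symm
        rw [Function.update_self, Function.update_of_ne h2]
        intro heq
        exact hm2 (heq ▸ Finset.mem_image_of_mem c (Finset.mem_inter.mpr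
          ⟨(G.mem_neighborFinset _ _).mpr hadj, Finset.mem_erase.mpr ⟨h2, hy⟩⟩))
      · by_cases h2 : y = v
        · subst h2
          rw [Function.update_self, Function.update_of_ne h1]
          intro heq
          exact hm2 (heq ▸ Finset.mem_image_of_mem c (Finset.mem_inter.mpr
            ⟨(G.mem_neighborFinset _ _).mpr hadj.symm, Finset.mem_erase.mpr ⟨h1, hx⟩⟩))
        · rw [Function.update_of_ne h1, Function.update_of_ne h2]
          exact hc2 x (Finset.mem_erase.mpr ⟨h1, hx⟩) y (Finset.mem_erase.mpr ⟨h2, hy⟩) hadj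
    · rw [Function.update_of_ne hva.symm, Function.update_of_ne hvb.symm]
      exact hc3
  · -- s ⊆ {a, b}
    push_neg at hthird
    refine ⟨fun _ => 0, fun v _ => hk, ?_, rfl⟩
    intro x hx y hy hadj
    exfalso
    have hx' : x = a ∨ x = b := by
      by_cases h : x = a
      · exact Or.inl h
      · exact Or.inr (hthird x hx h)
    have hy' : y = a ∨ y = b := by
      by_cases h : y = a
      · exact Or.inl h
      · exact Or.inr (hthird y hy h)
    rcases hx' with rfl | rfl <;> rcases hy' with rfl | rfl
    · exact G.irrefl hadj
    · exact hnadj hadj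
    · exact hnadj hadj.symm
    · exact G.irrefl hadj

omit [Fintype V] [DecidableEq V] [DecidableRel G.Adj] in
lemma colorable_of_bound (k : ℕ) (c : V → ℕ) (h1 : ∀ v, c v < k)
    (h2 : ∀ u v, G.Adj u v → c u ≠ c v) : G.Colorable k :=
  (G.colorable_iff_exists_bdd_nat_coloring k).mpr ⟨Coloring.mk c (fun h => h2 _ _ h), h1⟩

end Greedy


section Apps

variable [Fintype V] [DecidableEq V] [DecidableRel G.Adj]

/-- If a subset closes up under neighborhoods then it contains everything (for connected `G`). -/
lemma mem_of_closed (hconn : G.Connected) (s : Finset V) {u z : V} (hu : u ∈ s)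
    (hcl : ∀ x ∈ s, ∀ y, G.Adj x y → y ∈ s) : z ∈ s := by
  have hrt : RT G Set.univ u z := Walk.rt (hconn u z).some
  exact RT.closure hrt hu (fun a ha b hab _ => hcl a ha b hab)

lemma all_nbrs_subset_of_card {k : ℕ} {s : Finset V} {u : V} (hdeg : G.degree u ≤ k)
    (h : k ≤ ((G.neighborFinset u) ∩ s).card) : G.neighborFinset u ⊆ s := by
  have hd : (G.neighborFinset u).card = G.degree u := G.card_neighborFinset_eq_degree u
  have h1 : ((G.neighborFinset u) ∩ s).card ≤ (G.neighborFinset u).card :=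
    Finset.card_le_card Finset.inter_subset_left
  have h2 : G.neighborFinset u ∩ s = G.neighborFinset u :=
    Finset.eq_of_subset_of_card_le Finset.inter_subset_left (by omega)
  rw [← h2]
  exact Finset.inter_subset_right

lemma colorable_of_low_vertex (hconn : G.Connected) (k : ℕ) (hdeg : ∀ v, G.degree v ≤ k)
    {v : V} (hv : G.degree v < k) : G.Colorable k := by
  have hcond : ∀ s ⊆ Finset.univ, s.Nonempty →
      ∃ u ∈ s, ((G.neighborFinset u) ∩ s).card < k := by
    intro s _ hne
    by_contra hcon
    push_neg at hcon
    have hcl : ∀ x ∈ s, ∀ y, G.Adj x y → y ∈ s := by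
      intro x hx y hxy
      exact all_nbrs_subset_of_card (hdeg x) (hcon x hx) ((G.mem_neighborFinset _ _).mpr hxy)
    obtain ⟨u, hu⟩ := hne
    have hvs : v ∈ s := mem_of_closed hconn s hu hcl
    have := hcon v hvs
    have h1 : ((G.neighborFinset v) ∩ s).card ≤ G.degree v := by
      rw [← G.card_neighborFinset_eq_degree v]
      exact Finset.card_le_card Finset.inter_subset_left
    omega
  obtain ⟨c, hc1, hc2⟩ := greedyA (G := G) k Finset.univ hcond
  exact colorable_of_bound k c (fun u => hc1 u (Finset.mem_univ u))
    (fun u w h => hc2 u (Finset.mem_univ u) w (Finset.mem_univ w) h)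

lemma colorable_of_cutvertex (hconn : G.Connected) (k : ℕ) (hk : 0 < k)
    (hdeg : ∀ v, G.degree v ≤ k) {w : V} (hnc : ¬ Conn G (Set.univ \ {w})) :
    G.Colorable k := by
  classical
  set s : Set V := Set.univ \ {w} with hs
  obtain ⟨p, hp, q, hq, hpq⟩ : ∃ p ∈ s, ∃ q ∈ s, ¬ RT G s p q := by
    by_contra hcon
    push_neg at hcon
    exact hnc (fun x hx y hy => hcon x hx y hy)
  -- each component (plus w) admits a good coloring with w colored 0
  have piece : ∀ x ∈ s, ∃ c : V → ℕ,
      (∀ y ∈ compOf G s x ∪ {w}, c y < k) ∧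
      (∀ u ∈ compOf G s x ∪ {w}, ∀ v ∈ compOf G s x ∪ {w}, G.Adj u v → c u ≠ c v) ∧
      c w = 0 := by
    intro x hx
    set T : Set V := compOf G s x ∪ {w} with hT
    have hfin : T.Finite := Set.toFinite T
    have hcond : ∀ s' ⊆ hfin.toFinset, s'.Nonempty →
        ∃ v ∈ s', ((G.neighborFinset v) ∩ s').card < k := by
      intro s' hsub hne
      by_contra hcon
      push_neg at hcon
      have hcl : ∀ a ∈ s', ∀ y, G.Adj a y → y ∈ s' := by
        intro a ha y hay
        exact all_nbrs_subset_of_card (hdeg a) (hcon a ha) ((G.mem_neighborFinset _ _).mpr hay)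
      have hz : ∃ z, z ∈ s ∧ z ∉ compOf G s x := by
        by_contra hcon2
        push_neg at hcon2
        exact hpq (compOf.rt_mem hx (hcon2 p hp) (hcon2 q hq))
      obtain ⟨z, hz1, hz2⟩ := hz
      obtain ⟨u, hu⟩ := hne
      have hzs : z ∈ s' := mem_of_closed hconn s' hu hcl
      have hzT := hsub hzs
      rw [Set.Finite.mem_toFinset] at hzT
      rcases hzT with h | h
      · exact hz2 h
      · exact hz1.2 h
    obtain ⟨c0, hc01, hc02⟩ := greedyA (G := G) k hfin.toFinset hcond
    have hwT : w ∈ T := Or.inr rfl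
    refine ⟨(Equiv.swap 0 (c0 w)) ∘ c0, ?_, ?_, ?_⟩
    · intro y hy
      have hy' : c0 y < k := hc01 y (hfin.mem_toFinset.mpr hy)
      have hw' : c0 w < k := hc01 w (hfin.mem_toFinset.mpr hwT)
      simp only [Function.comp_apply]
      rcases eq_or_ne (c0 y) 0 with h | h
      · rw [h, Equiv.swap_apply_left]; exact hw'
      · rcases eq_or_ne (c0 y) (c0 w) with h2 | h2
        · rw [h2, Equiv.swap_apply_right]; exact hk
        · rw [Equiv.swap_apply_of_ne_of_ne h h2]; exact hy'
    · intro u hu v hv huv heq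
      exact hc02 u (hfin.mem_toFinset.mpr hu) v (hfin.mem_toFinset.mpr hv) huv
        ((Equiv.swap 0 (c0 w)).injective heq)
    · simp [Equiv.swap_apply_right]
  -- choose a coloring for each component and glue
  set P : Set V → (V → ℕ) → Prop := fun X c =>
    (∀ y ∈ X ∪ {w}, c y < k) ∧
    (∀ u ∈ X ∪ {w}, ∀ v ∈ X ∪ {w}, G.Adj u v → c u ≠ c v) ∧ c w = 0 with hP
  set g : Set V → (V → ℕ) := fun X => if h : ∃ c, P X c then h.choose else fun _ => 0 with hg
  have hgP : ∀ x ∈ s, P (compOf G s x) (g (compOf G s x)) := by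
    intro x hx
    have h : ∃ c, P (compOf G s x) c := piece x hx
    simp only [hg, dif_pos h]
    exact h.choose_spec
  set c : V → ℕ := fun v => if v = w then 0 else g (compOf G s v) v with hc
  have hmem : ∀ v : V, v ≠ w → v ∈ s := fun v hv => ⟨Set.mem_univ v, hv⟩
  apply colorable_of_bound k c
  · intro v
    by_cases hv : v = w
    · simpa [hc, hv] using hk
    · have h := (hgP v (hmem v hv)).1 v (Or.inl (compOf.self_mem (hmem v hv)))
      simpa [hc, hv] using h
  · intro u v huv
    have hune : u ≠ v := huv.ne
    by_cases hu : u = w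
    · have hv : v ≠ w := fun h => hune (hu.trans h.symm)
      have hPv := hgP v (hmem v hv)
      have hadj : G.Adj w v := hu ▸ huv
      have h := hPv.2.1 w (Or.inr rfl) v (Or.inl (compOf.self_mem (hmem v hv))) hadj
      rw [hPv.2.2] at h
      have hcu : c u = 0 := by simp [hc, hu]
      have hcv : c v = g (compOf G s v) v := by simp [hc, hv]
      rw [hcu, hcv]
      exact h
    · by_cases hv : v = w
      · have hPu := hgP u (hmem u hu)
        have hadj : G.Adj u w := hv ▸ huv
        have h := hPu.2.1 u (Or.inl (compOf.self_mem (hmem u hu))) w (Or.inr rfl) hadj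
        rw [hPu.2.2] at h
        have hcu : c u = g (compOf G s u) u := by simp [hc, hu]
        have hcv : c v = 0 := by simp [hc, hv]
        rw [hcu, hcv]
        exact h
      · have hus := hmem u hu
        have hvs := hmem v hv
        have hvC : v ∈ compOf G s u := compOf.closed (compOf.self_mem hus) huv hvs
        have hCeq : compOf G s v = compOf G s u := compOf.eq_of_mem hus hvC
        have h := (hgP u hus).2.1 u (Or.inl (compOf.self_mem hus)) v (Or.inl hvC) huv
        have hcu : c u = g (compOf G s u) u := by simp [hc, hu]
        have hcv : c v = g (compOf G s u) v := by simp [hc, hv, hCeq]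
        rw [hcu, hcv]
        exact h

end Apps


section Structural

/-- Exit lemma: a chain in `t` from inside `U` to a point outside `U` must reach `c`,
provided `U`'s boundary in `t` is only `c`. -/
lemma RT.exit {t U : Set V} {x z c : V} (h : RT G t x z) (hz : z ∉ U)
    (hcl : ∀ u ∈ U, ∀ y, G.Adj u y → y ∈ t → y ∈ U ∪ {c}) (hx : x ∈ U) :
    RT G (U ∪ {c}) x c := by
  induction h using Relation.ReflTransGen.head_induction_on with
  | refl => exact absurd hx hz
  | head h' hrt ih =>
      rename_i p q
      rcases hcl _ hx _ h'.1 h'.2 with hb | hb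
      · exact RT.head h'.1 (Or.inl hb) (ih hb)
      · have hqc : q = c := hb
        subst hqc
        exact RT.single h'.1 (Or.inr rfl)

/-- Components are pairwise equal-or-disjoint. -/
lemma compOf_disjoint {t : Set V} {x z w : V} (hx : x ∈ t) (hz : z ∈ t)
    (hw1 : w ∈ compOf G t x) (hw2 : w ∈ compOf G t z) : compOf G t x = compOf G t z := by
  rw [← compOf.eq_of_mem hx hw1, ← compOf.eq_of_mem hz hw2]

lemma compOf_avoid {t : Set V} {x a : V} (hx : x ∈ t) (ha : a ∉ compOf G t x) :
    compOf G (t \ {a}) x = compOf G t x := by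
  ext z
  constructor
  · rintro ⟨hz, hrt⟩
    exact ⟨hz.1, RT.mono Set.diff_subset hrt⟩
  · intro hz
    have hsub : compOf G t x ⊆ t \ {a} := by
      intro w hw
      exact ⟨(compOf.subset hw), fun hwa => ha (hwa ▸ hw)⟩
    have := RT.mono hsub (compOf.rt_within hx hz)
    exact ⟨hsub hz, this⟩

/-- Any vertex outside the component of `s \ {c}` containing `a` can reach `c` avoiding `a`. -/
lemma reach_avoiding {s : Set V} {c x0 z a : V} (hsconn : Conn G s) (hc : c ∈ s)
    (hx0 : x0 ∈ s \ {c}) (hz : z ∈ s) (hzC : z ∉ compOf G (s \ {c}) x0)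
    (ha : a ∈ compOf G (s \ {c}) x0) : RT G (s \ {a}) z c := by
  have hac : a ≠ c := fun h => (compOf.subset ha).2 (h ▸ rfl)
  have hca : c ∈ s \ {a} := ⟨hc, fun h => hac h.symm⟩
  by_cases hzc : z = c
  · exact hzc ▸ RT.refl
  · obtain ⟨y, hy1, hy2⟩ := exists_adj_of_conn hsconn hc hz hzc
    have hzs : z ∈ s \ {c} := ⟨hz, hzc⟩
    have hchain : RT G ((s \ {c}) ∩ compOf G (s \ {c}) z) z y :=
      RT.restrict hy1 (compOf.self_mem hzs) (fun u hu w hadj hw => compOf.closed hu hadj hw)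
    have hmono : ((s \ {c}) ∩ compOf G (s \ {c}) z) ⊆ s \ {a} := by
      rintro w ⟨hw1, hw2⟩
      refine ⟨hw1.1, fun hwa => ?_⟩
      have haz : a ∈ compOf G (s \ {c}) z := hwa ▸ hw2
      exact hzC (compOf_disjoint hzs hx0 haz ha ▸ compOf.self_mem hzs)
    exact RT.tail (RT.mono hmono hchain) hy2 hca

/-- Key extremal step: removing a vertex of a minimum hanging component (subject to a
downward-closed constraint `R`) keeps `s` connected. -/
lemma good_of_min {s : Set V} (hfin : s.Finite) (hsconn : Conn G s) (R : Set V → Prop)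
    (hR : ∀ C D : Set V, R C → D ⊆ C → R D) {c : V} {C : Set V} {x : V} (hc : c ∈ s)
    (hx : x ∈ s \ {c}) (hCdef : C = compOf G (s \ {c}) x)
    (hmin : ∀ (c' : V) (C' : Set V) (x' : V), c' ∈ s → x' ∈ s \ {c'} →
      C' = compOf G (s \ {c'}) x' → (∃ e ∈ s \ {c'}, e ∉ C') → R C' → C.ncard ≤ C'.ncard)
    (hRC : R C) {a : V} (ha : a ∈ C) : Conn G (s \ {a}) := by
  by_contra hnot
  have haC : a ∈ compOf G (s \ {c}) x := hCdef ▸ ha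
  have has : a ∈ s := (compOf.subset haC).1
  have hac : a ≠ c := fun h => (compOf.subset haC).2 (h ▸ rfl)
  have hca : c ∈ s \ {a} := ⟨hc, fun h => hac h.symm⟩
  obtain ⟨d, hd, e, he, hde⟩ : ∃ d ∈ s \ {a}, ∃ e ∈ s \ {a}, ¬ RT G (s \ {a}) d e := by
    by_contra hcon
    push_neg at hcon
    exact hnot (fun p hp q hq => hcon p hp q hq)
  obtain ⟨d', hd', hd'c⟩ : ∃ d' ∈ s \ {a}, ¬ RT G (s \ {a}) d' c := by
    by_contra hcon
    push_neg at hcon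
    exact hde (RT.trans (hcon d hd) (RT.symm he (hcon e he)))
  set D := compOf G (s \ {a}) d' with hD
  have hcD : c ∉ D := fun h => hd'c (compOf.rt_of_mem h)
  have hDC : D ⊆ C := by
    intro z hzD
    by_contra hzC
    have hz_s : z ∈ s := (compOf.subset hzD).1
    have hr : RT G (s \ {a}) z c :=
      reach_avoiding hsconn hc hx hz_s (fun hh => hzC (hCdef ▸ hh)) haC
    exact hd'c (RT.trans (compOf.rt_of_mem hzD) hr)
  have haD : a ∉ D := fun h => (compOf.subset h).2 rfl
  have hss : D ⊂ C := ⟨hDC, fun hsub => haD (hsub ha)⟩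
  have hCfin : C.Finite := hfin.subset (hCdef ▸ (compOf.subset.trans Set.diff_subset))
  have hlt : D.ncard < C.ncard := Set.ncard_lt_ncard hss hCfin
  have hge := hmin a D d' has hd' hD ⟨c, hca, hcD⟩ (hR C D hRC hDC)
  omega

/-- If `G` has no cutvertex, every hanging component in `G - v` contains a neighbor of `v`. -/
lemma exists_v_neighbor {v c x : V} (hx : x ∈ (Set.univ \ {v}) \ {c})
    (hncG : Conn G (Set.univ \ {c}))
    (hne : ∃ z ∈ (Set.univ \ {v}) \ {c}, z ∉ compOf G ((Set.univ \ {v}) \ {c}) x) :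
    ∃ a ∈ compOf G ((Set.univ \ {v}) \ {c}) x, G.Adj v a := by
  by_contra hcon
  push_neg at hcon
  obtain ⟨z, hz1, hz2⟩ := hne
  have hxc : x ∈ Set.univ \ {c} := ⟨trivial, hx.2⟩
  have hzc : z ∈ Set.univ \ {c} := ⟨trivial, hz1.2⟩
  have hrt := hncG hxc hzc
  have hcl : ∀ u ∈ compOf G ((Set.univ \ {v}) \ {c}) x, ∀ y, G.Adj u y →
      y ∈ Set.univ \ {c} → y ∈ compOf G ((Set.univ \ {v}) \ {c}) x := by
    intro u hu y hadj hy
    have hyv : y ≠ v := fun h => hcon u hu (h ▸ hadj.symm)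
    exact compOf.closed hu hadj ⟨⟨trivial, hyv⟩, hy.2⟩
  exact hz2 (RT.closure hrt (compOf.self_mem hx) hcl)

section WithFintype

variable [Fintype V] [DecidableEq V] [DecidableRel G.Adj]

lemma top_of_degrees (h : ∀ u : V, G.degree u = Fintype.card V - 1) : G = ⊤ := by
  ext x y
  simp only [top_adj]
  constructor
  · exact fun h' => h'.ne
  · intro hxy
    have hsub : G.neighborFinset x ⊆ Finset.univ.erase x := by
      intro z hz
      refine Finset.mem_erase.mpr ⟨?_, Finset.mem_univ z⟩
      exact fun h' => G.irrefl (h' ▸ (G.mem_neighborFinset x z).mp hz)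
    have hcard : (Finset.univ.erase x).card ≤ (G.neighborFinset x).card := by
      rw [G.card_neighborFinset_eq_degree, h x,
        Finset.card_erase_of_mem (Finset.mem_univ x), Finset.card_univ]
    have heq := Finset.eq_of_subset_of_card_le hsub hcard
    have hy : y ∈ G.neighborFinset x := by
      rw [heq]
      exact Finset.mem_erase.mpr ⟨fun h' => hxy h'.symm, Finset.mem_univ y⟩
    exact (G.mem_neighborFinset x y).mp hy

lemma exists_nonadj {k : ℕ} (hreg : ∀ u : V, G.degree u = k) (hnt : G ≠ ⊤) (v : V) :
    ∃ y, y ≠ v ∧ ¬ G.Adj v y := by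
  by_contra hcon
  push_neg at hcon
  apply hnt
  apply top_of_degrees
  have hnf : G.neighborFinset v = Finset.univ.erase v := by
    ext z
    rw [G.mem_neighborFinset, Finset.mem_erase]
    constructor
    · exact fun h' => ⟨h'.ne', Finset.mem_univ z⟩
    · exact fun h' => hcon z h'.1
  have hv : G.degree v = Fintype.card V - 1 := by
    rw [← G.card_neighborFinset_eq_degree, hnf,
      Finset.card_erase_of_mem (Finset.mem_univ v), Finset.card_univ]
  intro u
  rw [hreg u, ← hreg v, hv]

lemma exists_dist_two (hconn : G.Connected) {v y : V} (hyv : y ≠ v) (hny : ¬ G.Adj v y) :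
    ∃ u b, G.Adj v u ∧ G.Adj u b ∧ ¬ G.Adj v b ∧ b ≠ v := by
  by_contra hcon
  push_neg at hcon
  have hrt : RT G Set.univ v y := Walk.rt (hconn v y).some
  have hy : y ∈ {z : V | z = v ∨ G.Adj v z} := by
    apply RT.closure hrt (Or.inl rfl)
    intro u hu z hadj _
    rcases hu with rfl | hu
    · exact Or.inr hadj
    · by_cases hz : G.Adj v z
      · exact Or.inr hz
      · exact Or.inl (hcon u z hu hadj hz)
  rcases hy with h | h
  · exact hyv h
  · exact hny h

lemma structural (hconn : G.Connected) {k : ℕ} (hk : 3 ≤ k) (hreg : ∀ u : V, G.degree u = k)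
    (hnt : G ≠ ⊤) (hnc : ∀ z : V, Conn G (Set.univ \ {z})) :
    ∃ a b v0 : V, G.Adj v0 a ∧ G.Adj v0 b ∧ ¬ G.Adj a b ∧ a ≠ b ∧
      Conn G (Set.univ \ {a, b}) := by
  classical
  have hV : Nonempty V := hconn.nonempty
  obtain ⟨v⟩ := hV
  set s : Set V := Set.univ \ {v} with hs
  have hsconn : Conn G s := hnc v
  by_cases hH : ∀ w ∈ s, Conn G (s \ {w})
  · -- G - v has no cutvertex: take a distance-two pair through v
    obtain ⟨y, hyv, hny⟩ := exists_nonadj hreg hnt v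
    obtain ⟨u, b, h1, h2, h3, h4⟩ := exists_dist_two hconn hyv hny
    refine ⟨v, b, u, h1.symm, h2, h3, fun h => h4 h.symm, ?_⟩
    have hset : s \ {b} = Set.univ \ {v, b} := by
      rw [hs, Set.diff_diff, Set.singleton_union]
    rw [← hset]
    exact hH b ⟨trivial, h4⟩
  · push_neg at hH
    obtain ⟨w, hws, hwnc⟩ := hH
    obtain ⟨d, hd, e, he, hde⟩ : ∃ d ∈ s \ {w}, ∃ e ∈ s \ {w}, ¬ RT G (s \ {w}) d e := by
      by_contra hcon
      push_neg at hcon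
      exact hwnc (fun p hp q hq => hcon p hp q hq)
    -- first minimization (unconstrained)
    set N1 : Set ℕ := {n | ∃ (c x : V), c ∈ s ∧ x ∈ s \ {c} ∧
      (∃ e' ∈ s \ {c}, e' ∉ compOf G (s \ {c}) x) ∧ (compOf G (s \ {c}) x).ncard = n} with hN1
    have hN1ne : N1.Nonempty := by
      refine ⟨_, w, d, hws, hd, ⟨e, he, fun hh => hde (compOf.rt_of_mem hh)⟩, rfl⟩
    obtain ⟨c₁, x₁, hc₁, hx₁, hne₁, hcard₁⟩ := Nat.sInf_mem hN1ne
    set C₁ : Set V := compOf G (s \ {c₁}) x₁ with hC₁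
    have hmin₁ : ∀ (c' : V) (C' : Set V) (x' : V), c' ∈ s → x' ∈ s \ {c'} →
        C' = compOf G (s \ {c'}) x' → (∃ e' ∈ s \ {c'}, e' ∉ C') → True →
        C₁.ncard ≤ C'.ncard := by
      intro c' C' x' hc' hx' hC' hne' _
      subst hC'
      rw [hC₁, hcard₁]
      exact Nat.sInf_le ⟨c', x', hc', hx', hne', rfl⟩
    obtain ⟨a, haC₁, hav⟩ := exists_v_neighbor (G := G) hx₁ (hnc c₁) hne₁
    have hconn_a : Conn G (s \ {a}) :=
      good_of_min (Set.toFinite s) hsconn (fun _ => True) (fun _ _ _ _ => trivial)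
        hc₁ hx₁ hC₁ hmin₁ trivial haC₁
    -- second minimization (components avoiding C₁ and c₁)
    set R₂ : Set V → Prop := fun C => ∀ z ∈ C, z ∉ C₁ ∧ z ≠ c₁ with hR₂
    have hR₂down : ∀ C D : Set V, R₂ C → D ⊆ C → R₂ D := fun C D h hsub z hz => h z (hsub hz)
    obtain ⟨e₁, he₁, he₁C⟩ := hne₁
    have hx₁e₁ : x₁ ∉ compOf G (s \ {c₁}) e₁ := by
      intro hh
      have heq := compOf_disjoint (G := G) hx₁ he₁ (compOf.self_mem hx₁) hh
      refine he₁C ?_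
      rw [hC₁, heq]
      exact compOf.self_mem he₁
    have hR₂D₀ : R₂ (compOf G (s \ {c₁}) e₁) := by
      intro z hz
      constructor
      · intro hzC₁
        have hzC₁' : z ∈ compOf G (s \ {c₁}) x₁ := by rw [← hC₁]; exact hzC₁
        have heq := compOf_disjoint (G := G) hx₁ he₁ hzC₁' hz
        refine he₁C ?_
        rw [hC₁, heq]
        exact compOf.self_mem he₁
      · exact (compOf.subset hz).2
    set N2 : Set ℕ := {n | ∃ (c x : V), c ∈ s ∧ x ∈ s \ {c} ∧
      (∃ e' ∈ s \ {c}, e' ∉ compOf G (s \ {c}) x) ∧ R₂ (compOf G (s \ {c}) x) ∧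
      (compOf G (s \ {c}) x).ncard = n} with hN2
    have hN2ne : N2.Nonempty :=
      ⟨_, c₁, e₁, hc₁, he₁, ⟨x₁, hx₁, hx₁e₁⟩, hR₂D₀, rfl⟩
    obtain ⟨c₂, x₂, hc₂, hx₂, hne₂, hR₂C₂, hcard₂⟩ := Nat.sInf_mem hN2ne
    set C₂ : Set V := compOf G (s \ {c₂}) x₂ with hC₂
    have hmin₂ : ∀ (c' : V) (C' : Set V) (x' : V), c' ∈ s → x' ∈ s \ {c'} →
        C' = compOf G (s \ {c'}) x' → (∃ e' ∈ s \ {c'}, e' ∉ C') → R₂ C' →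
        C₂.ncard ≤ C'.ncard := by
      intro c' C' x' hc' hx' hC' hne' hR'
      subst hC'
      rw [hC₂, hcard₂]
      exact Nat.sInf_le ⟨c', x', hc', hx', hne', hR', rfl⟩
    obtain ⟨b, hbC₂, hvb⟩ := exists_v_neighbor (G := G) hx₂ (hnc c₂) hne₂
    have hconn_b : Conn G (s \ {b}) :=
      good_of_min (Set.toFinite s) hsconn R₂ hR₂down hc₂ hx₂ hC₂ hmin₂ hR₂C₂ hbC₂
    -- basic facts about a, b, c₂
    have has : a ∈ s := (compOf.subset haC₁).1
    have hbs : b ∈ s := (compOf.subset hbC₂).1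
    have hbC₁ : b ∉ C₁ := (hR₂C₂ b hbC₂).1
    have hbc₁ : b ≠ c₁ := (hR₂C₂ b hbC₂).2
    have hab : a ≠ b := fun h => hbC₁ (h ▸ haC₁)
    have hnadj : ¬ G.Adj a b := fun h => hbC₁ (compOf.closed haC₁ h ⟨hbs, hbc₁⟩)
    have hc₂C₂ : c₂ ∉ C₂ := fun h => (compOf.subset h).2 rfl
    have hc₂b : c₂ ≠ b := fun h => hc₂C₂ (h ▸ hbC₂)
    have hc₂a : c₂ ≠ a := by
      intro h
      obtain ⟨e₂, he₂, he₂C⟩ := hne₂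
      refine he₂C (⟨he₂, ?_⟩ : e₂ ∈ compOf G (s \ {c₂}) x₂)
      have := hconn_a (h ▸ hx₂ : x₂ ∈ s \ {a}) (h ▸ he₂ : e₂ ∈ s \ {a})
      exact h ▸ this
    have haC₂ : a ∉ C₂ := fun h => (hR₂C₂ a h).1 haC₁
    have hc₂s : c₂ ∈ s \ {a} := ⟨hc₂, fun h => hc₂a h⟩
    -- connectivity of (s \ {a}) \ C₂
    have hCeq : compOf G ((s \ {a}) \ {c₂}) x₂ = C₂ := by
      rw [Set.diff_diff_comm]
      exact compOf_avoid hx₂ haC₂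
    have hx₂' : x₂ ∈ (s \ {a}) \ {c₂} := by
      have hx₂C₂ : x₂ ∈ C₂ := compOf.self_mem hx₂
      exact ⟨⟨hx₂.1, fun h => haC₂ (h ▸ hx₂C₂)⟩, hx₂.2⟩
    have hconn_rest : Conn G ((s \ {a}) \ C₂) := by
      have := conn_sdiff_compOf hconn_a hc₂s hx₂'
      rwa [hCeq] at this
    -- every vertex of T := (s \ {a}) \ {b} reaches c₂ within T
    set T : Set V := (s \ {a}) \ {b} with hT
    have hc₂T : c₂ ∈ T := ⟨hc₂s, hc₂b⟩
    have hreach : ∀ x ∈ T, RT G T x c₂ := by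
      intro x hx
      by_cases hxC₂ : x ∈ C₂
      · have hchain : RT G (s \ {b}) x c₂ := hconn_b ⟨hx.1.1, hx.2⟩ ⟨hc₂, hc₂b⟩
        have hcl : ∀ u ∈ C₂ \ {b}, ∀ y, G.Adj u y → y ∈ s \ {b} → y ∈ (C₂ \ {b}) ∪ {c₂} := by
          intro u hu y hadj hy
          by_cases hyc₂ : y = c₂
          · exact Or.inr hyc₂
          · exact Or.inl ⟨compOf.closed hu.1 hadj ⟨hy.1, hyc₂⟩, hy.2⟩
        have hexit := RT.exit (G := G) hchain (fun h => hc₂C₂ h.1) hcl ⟨hxC₂, hx.2⟩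
        refine RT.mono ?_ hexit
        rintro z (⟨hz1, hz2⟩ | hz)
        · exact ⟨⟨(compOf.subset hz1).1, fun h => haC₂ (h ▸ hz1)⟩, hz2⟩
        · exact hz ▸ hc₂T
      · have hxmem : x ∈ (s \ {a}) \ C₂ := ⟨hx.1, hxC₂⟩
        have hc₂mem : c₂ ∈ (s \ {a}) \ C₂ := ⟨hc₂s, hc₂C₂⟩
        refine RT.mono ?_ (hconn_rest hxmem hc₂mem)
        rintro z ⟨hz1, hz2⟩
        exact ⟨hz1, fun h => hz2 (h ▸ hbC₂)⟩
    -- attach v using a third neighbor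
    have hz₀ : ∃ z₀, G.Adj v z₀ ∧ z₀ ≠ a ∧ z₀ ≠ b := by
      have h3 : 2 < (G.neighborFinset v).card := by
        rw [G.card_neighborFinset_eq_degree, hreg v]
        omega
      have hcard2 : ({a, b} : Finset V).card ≤ 2 := by
        refine le_trans (Finset.card_insert_le a {b}) ?_
        simp
      have hnsub : ¬ (G.neighborFinset v ⊆ {a, b}) := by
        intro hsub
        have := Finset.card_le_card hsub
        omega
      obtain ⟨z₀, hz₀1, hz₀2⟩ := Finset.not_subset.mp hnsub
      simp only [Finset.mem_insert, Finset.mem_singleton, not_or] at hz₀2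
      exact ⟨z₀, (G.mem_neighborFinset v z₀).mp hz₀1, hz₀2.1, hz₀2.2⟩
    obtain ⟨z₀, hvz₀, hz₀a, hz₀b⟩ := hz₀
    have hz₀T : z₀ ∈ T := ⟨⟨⟨trivial, hvz₀.ne'⟩, hz₀a⟩, hz₀b⟩
    refine ⟨a, b, v, hav, hvb, hnadj, hab, ?_⟩
    have hTsub : T ⊆ Set.univ \ {a, b} := by
      rintro z ⟨⟨_, hza⟩, hzb⟩
      refine ⟨trivial, fun hmem => ?_⟩
      rcases hmem with h | h
      · exact hza h
      · exact hzb h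
    have hvmem : v ∈ Set.univ \ ({a, b} : Set V) := by
      refine ⟨trivial, ?_⟩
      simp only [Set.mem_insert_iff, Set.mem_singleton_iff]
      push_neg
      exact ⟨fun h => G.irrefl (h ▸ hav), fun h => G.irrefl (h ▸ hvb)⟩
    have key : ∀ x ∈ Set.univ \ ({a, b} : Set V), RT G (Set.univ \ {a, b}) x c₂ := by
      intro x hx
      by_cases hxv : x = v
      · subst hxv
        exact RT.head hvz₀ (hTsub hz₀T) (RT.mono hTsub (hreach z₀ hz₀T))
      · have hxT : x ∈ T := by
          have hxa : x ≠ a := fun h => hx.2 (by simp [h])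
          have hxb : x ≠ b := fun h => hx.2 (by simp [h])
          exact ⟨⟨⟨trivial, hxv⟩, hxa⟩, hxb⟩
        exact RT.mono hTsub (hreach x hxT)
    intro x hx y hy
    exact RT.trans (key x hx) (RT.symm hy (key y hy))

end WithFintype

end Structural


section Cycle

variable [Fintype V] [DecidableEq V] [DecidableRel G.Adj]

/-- The neighbor of `c` other than `p` (junk if it doesn't exist). -/
noncomputable def other (G : SimpleGraph V) [Fintype V] [DecidableRel G.Adj] (p c : V) : V :=
  if h : ∃ q, G.Adj c q ∧ q ≠ p then h.choose else c

variable (hdeg : ∀ u : V, G.degree u = 2)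
include hdeg

lemma other_spec (p c : V) : G.Adj c (other G p c) ∧ other G p c ≠ p := by
  have hcard : (G.neighborFinset c).card = 2 := by
    rw [G.card_neighborFinset_eq_degree]; exact hdeg c
  have h : ∃ q, G.Adj c q ∧ q ≠ p := by
    have h1 : 0 < (G.neighborFinset c \ {p}).card := by
      have := Finset.le_card_sdiff ({p} : Finset V) (G.neighborFinset c)
      simp only [Finset.card_singleton] at this
      omega
    obtain ⟨q, hq⟩ := Finset.card_pos.mp h1
    rw [Finset.mem_sdiff, Finset.mem_singleton, G.mem_neighborFinset] at hq
    exact ⟨q, hq⟩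
  rw [other, dif_pos h]
  exact h.choose_spec

lemma other_eq {p c q : V} (hp : G.Adj c p) (hq : G.Adj c q) (hqp : q ≠ p) :
    other G p c = q := by
  have hcard : (G.neighborFinset c).card = 2 := by
    rw [G.card_neighborFinset_eq_degree]; exact hdeg c
  have hsub : ({q, p} : Finset V) ⊆ G.neighborFinset c := by
    intro z hz
    rcases Finset.mem_insert.mp hz with rfl | hz
    · exact (G.mem_neighborFinset c z).mpr hq
    · rw [Finset.mem_singleton] at hz
      exact (G.mem_neighborFinset c z).mpr (hz ▸ hp)
  have hpair : ({q, p} : Finset V).card = 2 := Finset.card_pair hqp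
  have heq : ({q, p} : Finset V) = G.neighborFinset c :=
    Finset.eq_of_subset_of_card_le hsub (by omega)
  have hmem : other G p c ∈ ({q, p} : Finset V) := by
    rw [heq, G.mem_neighborFinset]
    exact (other_spec (G := G) hdeg p c).1
  rcases Finset.mem_insert.mp hmem with h | h
  · exact h
  · rw [Finset.mem_singleton] at h
    exact absurd h (other_spec (G := G) hdeg p c).2

omit hdeg in
/-- The bi-infinite walk through a 2-regular graph. -/
noncomputable def seq (G : SimpleGraph V) [Fintype V] [DecidableRel G.Adj] (v0 u0 : V) :
    ℕ → V × V
  | 0 => (v0, u0)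
  | n + 1 => ((seq G v0 u0 n).2, other G (seq G v0 u0 n).1 (seq G v0 u0 n).2)

omit hdeg in
lemma seq_fst (v0 u0 : V) (n : ℕ) : (seq G v0 u0 (n + 1)).1 = (seq G v0 u0 n).2 := rfl

section F

variable (v0 u0 : V) (hadj0 : G.Adj v0 u0)

/-- Vertex sequence of the walk. -/
noncomputable def fseq (n : ℕ) : V := (seq G v0 u0 n).1

omit hdeg in
lemma fseq_rec (n : ℕ) :
    fseq (G := G) v0 u0 (n + 2) = other G (fseq (G := G) v0 u0 n) (fseq (G := G) v0 u0 (n + 1)) := by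
  rfl

include hadj0

lemma fseq_adj : ∀ n : ℕ, G.Adj (fseq (G := G) v0 u0 n) (fseq (G := G) v0 u0 (n + 1)) := by
  intro n
  induction n with
  | zero => exact hadj0
  | succ m ih =>
      rw [fseq_rec]
      exact (other_spec (G := G) hdeg _ _).1

omit hadj0 in
lemma fseq_ne2 (n : ℕ) : fseq (G := G) v0 u0 (n + 2) ≠ fseq (G := G) v0 u0 n := by
  rw [fseq_rec]
  exact (other_spec (G := G) hdeg _ _).2

lemma fseq_back (n : ℕ) :
    other G (fseq (G := G) v0 u0 (n + 2)) (fseq (G := G) v0 u0 (n + 1)) =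
      fseq (G := G) v0 u0 n := by
  refine other_eq (G := G) hdeg ?_ ?_ ?_
  · exact fseq_adj (G := G) hdeg v0 u0 hadj0 (n + 1)
  · exact (fseq_adj (G := G) hdeg v0 u0 hadj0 n).symm
  · exact fun h => fseq_ne2 (G := G) hdeg v0 u0 n h.symm

lemma pair_back {m n : ℕ} (h1 : fseq (G := G) v0 u0 (m + 1) = fseq (G := G) v0 u0 (n + 1))
    (h2 : fseq (G := G) v0 u0 (m + 2) = fseq (G := G) v0 u0 (n + 2)) :
    fseq (G := G) v0 u0 m = fseq (G := G) v0 u0 n := by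
  rw [← fseq_back (G := G) hdeg v0 u0 hadj0 m, ← fseq_back (G := G) hdeg v0 u0 hadj0 n, h1, h2]

lemma shift_down : ∀ (t m n : ℕ),
    fseq (G := G) v0 u0 (m + t) = fseq (G := G) v0 u0 (n + t) →
    fseq (G := G) v0 u0 (m + t + 1) = fseq (G := G) v0 u0 (n + t + 1) →
    fseq (G := G) v0 u0 m = fseq (G := G) v0 u0 n ∧
      fseq (G := G) v0 u0 (m + 1) = fseq (G := G) v0 u0 (n + 1) := by
  intro t
  induction t with
  | zero => exact fun m n h1 h2 => ⟨h1, h2⟩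
  | succ s ih =>
      intro m n h1 h2
      have h0 : fseq (G := G) v0 u0 (m + s) = fseq (G := G) v0 u0 (n + s) :=
        pair_back (G := G) hdeg v0 u0 hadj0 h1 h2
      exact ih m n h0 h1

omit hadj0 in
lemma shift_up : ∀ (t m n : ℕ),
    fseq (G := G) v0 u0 m = fseq (G := G) v0 u0 n →
    fseq (G := G) v0 u0 (m + 1) = fseq (G := G) v0 u0 (n + 1) →
    fseq (G := G) v0 u0 (m + t) = fseq (G := G) v0 u0 (n + t) ∧
      fseq (G := G) v0 u0 (m + t + 1) = fseq (G := G) v0 u0 (n + t + 1) := by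
  intro t
  induction t with
  | zero => exact fun m n h1 h2 => ⟨h1, h2⟩
  | succ s ih =>
      intro m n h1 h2
      obtain ⟨hA, hB⟩ := ih m n h1 h2
      refine ⟨hB, ?_⟩
      have e1 : m + (s + 1) + 1 = (m + s) + 2 := by omega
      have e2 : n + (s + 1) + 1 = (n + s) + 2 := by omega
      rw [e1, e2, fseq_rec, fseq_rec, hA, hB]

end F

lemma two_regular_case (hconn : G.Connected) :
    (∃ n : ℕ, Odd n ∧ Nonempty (G ≃g cycleGraph n)) ∨ G.Colorable 2 := by
  classical
  have hV : Nonempty V := hconn.nonempty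
  obtain ⟨v0⟩ := hV
  have hpos : 0 < (G.neighborFinset v0).card := by
    rw [G.card_neighborFinset_eq_degree, hdeg v0]; omega
  obtain ⟨u0, hu0⟩ := Finset.card_pos.mp hpos
  have hadj0 : G.Adj v0 u0 := (G.mem_neighborFinset v0 u0).mp hu0
  set f : ℕ → V := fseq (G := G) v0 u0 with hf
  have hstep : ∀ n, G.Adj (f n) (f (n+1)) := fseq_adj hdeg v0 u0 hadj0
  have hne2 : ∀ n, f (n+2) ≠ f n := fseq_ne2 hdeg v0 u0
  have hrec : ∀ n, f (n+2) = other G (f n) (f (n+1)) := fseq_rec v0 u0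
  have hdown := shift_down hdeg v0 u0 hadj0
  have hup := shift_up hdeg v0 u0
  have hback := fseq_back hdeg v0 u0 hadj0
  -- find a repetition of consecutive pairs
  obtain ⟨i, j, hij, hpair1, hpair2⟩ :
      ∃ i j : ℕ, i < j ∧ f i = f j ∧ f (i+1) = f (j+1) := by
    obtain ⟨i, j, hne, heq⟩ := Finite.exists_ne_map_eq_of_infinite (fun n : ℕ => (f n, f (n+1)))
    have h1 : f i = f j := congrArg Prod.fst heq
    have h2 : f (i+1) = f (j+1) := congrArg Prod.snd heq
    rcases lt_or_gt_of_ne hne with h | h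
    · exact ⟨i, j, h, h1, h2⟩
    · exact ⟨j, i, h, h1.symm, h2.symm⟩
  -- the minimal period p
  obtain ⟨p, hppos, hp0, hp1, hpmin⟩ :
      ∃ p : ℕ, 0 < p ∧ f p = f 0 ∧ f (p+1) = f 1 ∧
        ∀ q, 0 < q → f q = f 0 → f (q+1) = f 1 → p ≤ q := by
    set P : Set ℕ := {q | 0 < q ∧ f q = f 0 ∧ f (q+1) = f 1} with hP
    have hPne : P.Nonempty := by
      refine ⟨j - i, by omega, ?_, ?_⟩
      · have e1 : (j - i) + i = j := by omega
        have hA : f (0 + i) = f ((j - i) + i) := by rw [Nat.zero_add, e1]; exact hpair1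
        have hB : f (0 + i + 1) = f ((j - i) + i + 1) := by rw [Nat.zero_add, e1]; exact hpair2
        exact (hdown i 0 (j - i) hA hB).1.symm
      · have e1 : (j - i) + i = j := by omega
        have hA : f (0 + i) = f ((j - i) + i) := by rw [Nat.zero_add, e1]; exact hpair1
        have hB : f (0 + i + 1) = f ((j - i) + i + 1) := by rw [Nat.zero_add, e1]; exact hpair2
        have := (hdown i 0 (j - i) hA hB).2.symm
        rwa [Nat.zero_add] at this
    obtain ⟨h1, h2, h3⟩ := Nat.sInf_mem hPne
    exact ⟨sInf P, h1, h2, h3, fun q hq1 hq2 hq3 => Nat.sInf_le ⟨hq1, hq2, hq3⟩⟩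
  -- periodicity
  have hperiod : ∀ t, f (p + t) = f t := by
    intro t
    have h2 : f (p + 1) = f (0 + 1) := by rwa [Nat.zero_add]
    have := (hup t p 0 hp0 h2).1
    rwa [Nat.zero_add] at this
  have hmod : ∀ k, f k = f (k % p) := by
    intro k
    have haux : ∀ q r, f (r + q * p) = f r := by
      intro q
      induction q with
      | zero => simp
      | succ s ih =>
          intro r
          have h1 : r + (s + 1) * p = p + (r + s * p) := by ring
          rw [h1, hperiod, ih]
    conv_lhs => rw [← Nat.mod_add_div k p]
    have h2 : k % p + p * (k / p) = k % p + (k / p) * p := by ring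
    rw [h2]
    exact haux (k / p) (k % p)
  -- p ≥ 3
  have hp3 : 3 ≤ p := by
    have h1 : p ≠ 1 := by
      intro h
      subst h
      exact (hstep 0).ne hp0.symm
    have h2 : p ≠ 2 := by
      intro h
      subst h
      exact hne2 0 hp0
    omega
  -- neighborhoods along the walk
  have hnf : ∀ A : ℕ, G.neighborFinset (f (A+1)) = {f A, f (A+2)} := by
    intro A
    have hsub : ({f A, f (A+2)} : Finset V) ⊆ G.neighborFinset (f (A+1)) := by
      intro z hz
      rcases Finset.mem_insert.mp hz with rfl | hz
      · exact (G.mem_neighborFinset _ _).mpr (hstep A).symm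
      · rw [Finset.mem_singleton] at hz
        subst hz
        exact (G.mem_neighborFinset _ _).mpr (hstep (A+1))
    have hcardp : ({f A, f (A+2)} : Finset V).card = 2 :=
      Finset.card_pair (fun h => hne2 A h.symm)
    have hcn : (G.neighborFinset (f (A+1))).card = 2 := by
      rw [G.card_neighborFinset_eq_degree]; exact hdeg _
    exact (Finset.eq_of_subset_of_card_le hsub (by omega)).symm
  -- core injectivity claim
  have claim : ∀ A B : ℕ, A < B → B + 1 ≤ p → f (A+1) ≠ f (B+1) := by
    intro A B hAB hBp hfab
    have hnfeq : ({f A, f (A+2)} : Finset V) = {f B, f (B+2)} := by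
      rw [← hnf A, ← hnf B, hfab]
    have hA2 : f (A+2) = f B ∨ f (A+2) = f (B+2) := by
      have h := hnfeq ▸ (Finset.mem_insert_self (f A) {f (A+2)})
      have h' : f (A+2) ∈ ({f B, f (B+2)} : Finset V) := by
        rw [← hnfeq]
        simp
      simpa using h'
    have hA0 : f A = f B ∨ f A = f (B+2) := by
      have h' : f A ∈ ({f B, f (B+2)} : Finset V) := by
        rw [← hnfeq]
        simp
      simpa using h'
    rcases hA2 with h2 | h2
    · rcases hA0 with h0 | h0
      · -- direct repetition at distance B - A < p
        have e1 : (B - A) + A = B := by omega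
        have hX : f (0 + A) = f ((B - A) + A) := by rw [Nat.zero_add, e1]; exact h0
        have hY : f (0 + A + 1) = f ((B - A) + A + 1) := by rw [Nat.zero_add, e1]; exact hfab
        obtain ⟨hC, hD⟩ := hdown A 0 (B - A) hX hY
        have hD' : f ((B - A) + 1) = f 1 := by
          have := hD.symm
          rwa [Nat.zero_add] at this
        have := hpmin (B - A) (by omega) hC.symm hD'
        omega
      · -- reversal case
        have S : ∀ t, t ≤ B + 1 → (f (A + t) = f (B + 2 - t) ∧ f (A + t + 1) = f (B + 1 - t)) := by
          intro t
          induction t with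
          | zero =>
              intro _
              constructor
              · simpa using h0
              · simpa using hfab
          | succ s ih =>
              intro hs
              obtain ⟨hS1, hS2⟩ := ih (by omega)
              constructor
              · have e1 : B + 2 - (s+1) = B + 1 - s := by omega
                rw [show A + (s+1) = A + s + 1 by omega, e1]
                exact hS2
              · have hsB : s ≤ B := by omega
                have e2 : B + 2 - s = (B - s) + 2 := by omega
                have e3 : B + 1 - s = (B - s) + 1 := by omega
                have e4 : B + 1 - (s+1) = B - s := by omega
                rw [show A + (s+1) + 1 = (A + s) + 2 by omega, e4, hrec (A+s), hS1, hS2, e2, e3]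
                exact hback (B - s)
        have hM1 : 1 ≤ B - A := by omega
        rcases Nat.even_or_odd (B - A) with hM | hM
        · obtain ⟨h, hMh⟩ := hM
          obtain ⟨hS1, hS2⟩ := S (h+1) (by omega)
          have eB : B + 1 - (h+1) = A + h := by omega
          rw [show A + (h+1) + 1 = (A + h) + 2 by omega, eB] at hS2
          exact hne2 (A + h) hS2
        · obtain ⟨h, hMh⟩ := hM
          obtain ⟨hS1, hS2⟩ := S (h+1) (by omega)
          have eB : B + 2 - (h+1) = (A + h + 1) + 1 := by omega
          rw [show A + (h+1) = A + h + 1 by omega, eB] at hS1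
          exact (hstep (A+h+1)).ne hS1
    · -- shifted repetition
      have e1 : (B - A) + (A + 1) = B + 1 := by omega
      have hX : f (0 + (A + 1)) = f ((B - A) + (A + 1)) := by rw [Nat.zero_add, e1]; exact hfab
      have hY : f (0 + (A + 1) + 1) = f ((B - A) + (A + 1) + 1) := by
        rw [Nat.zero_add, e1]
        exact h2
      obtain ⟨hC, hD⟩ := hdown (A+1) 0 (B - A) hX hY
      have hD' : f ((B - A) + 1) = f 1 := by
        have := hD.symm
        rwa [Nat.zero_add] at this
      have := hpmin (B - A) (by omega) hC.symm hD'
      omega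
  -- injectivity on a full period
  have hinj : ∀ a b : ℕ, a < b → b < p → f a ≠ f b := by
    intro a b hab hbp hfeq
    rcases Nat.eq_zero_or_pos a with rfl | ha
    · have hb1 : 1 ≤ b := hab
      have hbp' : f b = f p := by rw [← hfeq, hp0]
      refine claim (b-1) (p-1) (by omega) (by omega) ?_
      rw [show b - 1 + 1 = b by omega, show p - 1 + 1 = p by omega]
      exact hbp'
    · refine claim (a-1) (b-1) (by omega) (by omega) ?_
      rw [show a-1+1 = a by omega, show b-1+1 = b by omega]
      exact hfeq
  have huniq : ∀ a b : ℕ, a < p → b < p → f a = f b → a = b := by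
    intro a b hap hbp hfeq
    by_contra hne
    rcases lt_or_gt_of_ne hne with h | h
    · exact hinj a b h hbp hfeq
    · exact hinj b a h hap hfeq.symm
  -- surjectivity
  have hsurj : ∀ z : V, ∃ k, k < p ∧ f k = z := by
    set U : Finset V := (Finset.range p).image f with hU
    have hcl : ∀ x ∈ U, ∀ y, G.Adj x y → y ∈ U := by
      intro x hx y hxy
      obtain ⟨k, hk, rfl⟩ := Finset.mem_image.mp hx
      rw [Finset.mem_range] at hk
      have hmem : y ∈ G.neighborFinset (f k) := (G.mem_neighborFinset _ _).mpr hxy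
      rcases Nat.eq_zero_or_pos k with rfl | hk1
      · rw [← hp0, show p = (p-1) + 1 by omega, hnf (p-1)] at hmem
        rcases Finset.mem_insert.mp hmem with rfl | hmem
        · exact Finset.mem_image.mpr ⟨p-1, Finset.mem_range.mpr (by omega), rfl⟩
        · rw [Finset.mem_singleton] at hmem
          subst hmem
          refine Finset.mem_image.mpr ⟨1, Finset.mem_range.mpr (by omega), ?_⟩
          rw [show p - 1 + 2 = p + 1 by omega, hp1]
      · rw [show k = (k-1) + 1 by omega, hnf (k-1)] at hmem
        rcases Finset.mem_insert.mp hmem with rfl | hmem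
        · exact Finset.mem_image.mpr ⟨k-1, Finset.mem_range.mpr (by omega), rfl⟩
        · rw [Finset.mem_singleton] at hmem
          subst hmem
          refine Finset.mem_image.mpr ⟨(k+1) % p, Finset.mem_range.mpr (Nat.mod_lt _ (by omega)), ?_⟩
          rw [← hmod (k+1), show k - 1 + 2 = k + 1 by omega]
    intro z
    have hU0 : f 0 ∈ U := Finset.mem_image.mpr ⟨0, Finset.mem_range.mpr (by omega), rfl⟩
    have hz : z ∈ U := mem_of_closed hconn U hU0 hcl
    obtain ⟨k, hk, hfk⟩ := Finset.mem_image.mp hz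
    exact ⟨k, Finset.mem_range.mp hk, hfk⟩
  -- write p = m + 3
  obtain ⟨m, rfl⟩ : ∃ m, p = m + 3 := ⟨p - 3, by omega⟩
  -- the equivalence with Fin (m+3)
  have hbij : Function.Bijective (fun i : Fin (m+3) => f i.val) := by
    constructor
    · intro i j hij2
      exact Fin.ext (huniq i.val j.val i.isLt j.isLt hij2)
    · intro z
      obtain ⟨k, hk, hfk⟩ := hsurj z
      exact ⟨⟨k, hk⟩, hfk⟩
  set e : Fin (m+3) ≃ V := Equiv.ofBijective _ hbij with he
  have he_apply : ∀ i : Fin (m+3), e i = f i.val := fun _ => rfl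
  -- neighbor characterization
  have hnbr : ∀ a b : ℕ, a < m+3 → b < m+3 → G.Adj (f a) (f b) →
      b = (a+1) % (m+3) ∨ a = (b+1) % (m+3) := by
    intro a b hap hbp hadj
    have hmem : f b ∈ G.neighborFinset (f a) := (G.mem_neighborFinset _ _).mpr hadj
    rcases Nat.eq_zero_or_pos a with rfl | ha1
    · rw [← hp0, show m + 3 = (m+2) + 1 by omega, hnf (m+2)] at hmem
      rcases Finset.mem_insert.mp hmem with hb | hb
      · right
        have hbeq : b = m + 2 := huniq b (m+2) hbp (by omega) hb
        rw [hbeq, show m + 2 + 1 = m + 3 by omega, Nat.mod_self]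
      · left
        rw [Finset.mem_singleton] at hb
        have hb1 : f (m + 2 + 2) = f 1 := by
          rw [hmod (m + 2 + 2), show m + 2 + 2 = 1 + (m + 3) by omega, Nat.add_mod_right,
            Nat.mod_eq_of_lt (by omega)]
        have hbeq : b = 1 := huniq b 1 hbp (by omega) (hb.trans hb1)
        rw [hbeq, Nat.zero_add, Nat.mod_eq_of_lt (by omega)]
    · rw [show a = (a-1) + 1 by omega, hnf (a-1)] at hmem
      rcases Finset.mem_insert.mp hmem with hb | hb
      · right
        have hbeq : b = a - 1 := huniq b (a-1) hbp (by omega) hb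
        rw [hbeq, show a - 1 + 1 = a by omega, Nat.mod_eq_of_lt hap]
      · left
        rw [Finset.mem_singleton] at hb
        rw [show a - 1 + 2 = a + 1 by omega] at hb
        rcases Nat.lt_or_ge (a+1) (m+3) with hlt | hge
        · have hbeq : b = a + 1 := huniq b (a+1) hbp hlt hb
          rw [hbeq, Nat.mod_eq_of_lt hlt]
        · have haeq : a + 1 = m + 3 := by omega
          have hb1 : f (a+1) = f 0 := by rw [haeq]; exact hp0
          have hbeq : b = 0 := huniq b 0 hbp (by omega) (hb.trans hb1)
          rw [hbeq, haeq, Nat.mod_self]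
  have hGadj : ∀ i j : Fin (m+3), G.Adj (e i) (e j) ↔ (cycleGraph (m+3)).Adj i j := by
    intro i j
    rw [he_apply, he_apply, cycleGraph_adj]
    constructor
    · intro hadj
      rcases hnbr i.val j.val i.isLt j.isLt hadj with h | h
      · right
        have hj : j = i + 1 := Fin.ext (by rw [Fin.val_add, Fin.val_one]; exact h)
        rw [hj]
        exact add_sub_cancel_left i 1
      · left
        have hi : i = j + 1 := Fin.ext (by rw [Fin.val_add, Fin.val_one]; exact h)
        rw [hi]
        exact add_sub_cancel_left j 1
    · intro hadj
      rcases hadj with h | h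
      · have hi : i = j + 1 := (sub_eq_iff_eq_add.mp h).trans (add_comm 1 j)
        have hval : i.val = (j.val + 1) % (m+3) := by rw [hi, Fin.val_add, Fin.val_one]
        rw [hval, ← hmod (j.val+1)]
        exact (hstep j.val).symm
      · have hj : j = i + 1 := (sub_eq_iff_eq_add.mp h).trans (add_comm 1 i)
        have hval : j.val = (i.val + 1) % (m+3) := by rw [hj, Fin.val_add, Fin.val_one]
        rw [hval, ← hmod (i.val+1)]
        exact hstep i.val
  rcases Nat.even_or_odd (m+3) with hEven | hOdd
  · right
    obtain ⟨r, hr⟩ := hEven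
    apply colorable_of_bound 2 (fun z => (e.symm z).val % 2)
    · intro z
      exact Nat.mod_lt _ (by omega)
    · intro z w hzw heq
      have hadj : G.Adj (e (e.symm z)) (e (e.symm w)) := by
        rw [Equiv.apply_symm_apply, Equiv.apply_symm_apply]
        exact hzw
      rw [he_apply, he_apply] at hadj
      have hiv := (e.symm z).isLt
      have hjv := (e.symm w).isLt
      rcases hnbr (e.symm z).val (e.symm w).val hiv hjv hadj with h | h
      · rcases Nat.lt_or_ge ((e.symm z).val + 1) (m+3) with hlt | hge
        · rw [Nat.mod_eq_of_lt hlt] at h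
          omega
        · have h1 : (e.symm z).val + 1 = m + 3 := by omega
          rw [h1, Nat.mod_self] at h
          omega
      · rcases Nat.lt_or_ge ((e.symm w).val + 1) (m+3) with hlt | hge
        · rw [Nat.mod_eq_of_lt hlt] at h
          omega
        · have h1 : (e.symm w).val + 1 = m + 3 := by omega
          rw [h1, Nat.mod_self] at h
          omega
  · left
    refine ⟨m+3, hOdd, ⟨⟨e.symm, ?_⟩⟩⟩
    intro z w
    have := hGadj (e.symm z) (e.symm w)
    rw [Equiv.apply_symm_apply, Equiv.apply_symm_apply] at this
    exact this.symm

end Cycle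

end BrooksAux

open SimpleGraph BrooksAux

theorem brooks_standard {V : Type*} [Fintype V] (G : SimpleGraph V)
    [DecidableRel G.Adj]
    (hconn : G.Connected)
    (hnotcomplete : G ≠ ⊤)
    (hnotoddcycle : ¬ ∃ n : ℕ, Odd n ∧ Nonempty (G ≃g cycleGraph n)) :
    G.chromaticNumber ≤ (G.maxDegree : ℕ∞) := by
  classical
  suffices h : G.Colorable G.maxDegree by exact h.chromaticNumber_le
  set Δ := G.maxDegree with hΔ
  have hdegle : ∀ v, G.degree v ≤ Δ := fun v => G.degree_le_maxDegree v
  have hV : Nonempty V := hconn.nonempty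
  by_cases hlow : ∃ v, G.degree v < Δ
  · obtain ⟨v, hv⟩ := hlow
    exact colorable_of_low_vertex hconn Δ hdegle hv
  · push_neg at hlow
    have hreg : ∀ v, G.degree v = Δ := fun v => le_antisymm (hdegle v) (hlow v)
    rcases Nat.lt_or_ge Δ 3 with hΔsmall | hΔ3
    · have hcases : Δ = 0 ∨ Δ = 1 ∨ Δ = 2 := by omega
      rcases hcases with h0 | h1 | h2
      · -- Δ = 0 : G is a single vertex, hence complete
        exfalso
        apply hnotcomplete
        have hnoadj : ∀ x y : V, ¬ G.Adj x y := by
          intro x y hxy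
          have hmem : y ∈ G.neighborFinset x := (G.mem_neighborFinset x y).mpr hxy
          have hc : (G.neighborFinset x).card = 0 := by
            rw [G.card_neighborFinset_eq_degree, hreg x, h0]
          rw [Finset.card_eq_zero] at hc
          rw [hc] at hmem
          exact absurd hmem (Finset.notMem_empty y)
        have hsingle : ∀ x y : V, x = y := by
          intro x y
          have hrt : RT G Set.univ x y := BrooksAux.Walk.rt (hconn x y).some
          cases hrt with
          | refl => rfl
          | tail h1 h2 => exact absurd h2.1 (hnoadj _ _)
        ext x y
        simp only [top_adj]
        constructor
        · exact fun h => absurd h (hnoadj x y)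
        · exact fun h => absurd (hsingle x y) h
      · -- Δ = 1 : G is a single edge, hence complete
        exfalso
        apply hnotcomplete
        have v : V := Classical.arbitrary V
        have hc : (G.neighborFinset v).card = 1 := by
          rw [G.card_neighborFinset_eq_degree, hreg v, h1]
        obtain ⟨u, hu⟩ := Finset.card_eq_one.mp hc
        have hvu : G.Adj v u := by
          rw [← G.mem_neighborFinset, hu]
          exact Finset.mem_singleton_self u
        have hcu : (G.neighborFinset u).card = 1 := by
          rw [G.card_neighborFinset_eq_degree, hreg u, h1]
        obtain ⟨u', hu'⟩ := Finset.card_eq_one.mp hcu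
        have hu'v : u' = v := by
          have : v ∈ G.neighborFinset u := (G.mem_neighborFinset u v).mpr hvu.symm
          rw [hu'] at this
          exact (Finset.mem_singleton.mp this).symm
        rw [hu'v] at hu'
        have hall : ∀ z : V, z ∈ ({v, u} : Finset V) := by
          intro z
          refine mem_of_closed hconn {v, u} (Finset.mem_insert_self v {u}) ?_
          intro x hx y hxy
          rcases Finset.mem_insert.mp hx with rfl | hx
          · have : y ∈ G.neighborFinset x := (G.mem_neighborFinset x y).mpr hxy
            rw [hu] at this
            rw [Finset.mem_singleton.mp this]
            exact Finset.mem_insert_of_mem (Finset.mem_singleton_self u)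
          · rw [Finset.mem_singleton] at hx
            have : y ∈ G.neighborFinset u := (G.mem_neighborFinset u y).mpr (hx ▸ hxy)
            rw [hu'] at this
            rw [Finset.mem_singleton.mp this]
            exact Finset.mem_insert_self v {u}
        ext x y
        simp only [top_adj]
        constructor
        · exact fun h => h.ne
        · intro hxy
          rcases Finset.mem_insert.mp (hall x) with rfl | hx <;>
            rcases Finset.mem_insert.mp (hall y) with rfl | hy
          · exact absurd rfl hxy
          · rw [Finset.mem_singleton.mp hy]
            exact hvu
          · rw [Finset.mem_singleton.mp hx]
            exact hvu.symm
          · rw [Finset.mem_singleton.mp hx, Finset.mem_singleton.mp hy] at hxy ⊢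
            exact absurd rfl hxy
      · -- Δ = 2 : cycle case
        have hdeg2 : ∀ u : V, G.degree u = 2 := fun u => h2 ▸ hreg u
        rcases two_regular_case hdeg2 hconn with hodd | hcol
        · exact absurd hodd hnotoddcycle
        · rw [h2]
          exact hcol
    · -- Δ ≥ 3, regular
      by_cases hcut : ∀ z : V, Conn G (Set.univ \ {z})
      · obtain ⟨a, b, v0, h1, h2, h3, h4, h5⟩ :=
          structural hconn hΔ3 hreg hnotcomplete hcut
        have hv0ab : v0 ∈ Set.univ \ ({a, b} : Set V) := by
          refine ⟨trivial, fun hmem => ?_⟩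
          rcases hmem with h | h
          · exact G.irrefl (h ▸ h1)
          · exact G.irrefl (h ▸ h2)
        have H : ∀ s : Finset V, a ∈ s → b ∈ s → (∃ x ∈ s, x ≠ a ∧ x ≠ b) →
            ∃ v ∈ s, v ≠ a ∧ v ≠ b ∧ (((G.neighborFinset v) ∩ s).card < Δ ∨
              (G.Adj v a ∧ G.Adj v b ∧ ((G.neighborFinset v) ∩ s).card ≤ Δ)) := by
          intro s has hbs hthird
          by_cases hv0 : v0 ∈ s
          · refine ⟨v0, hv0, h1.ne, h2.ne, Or.inr ⟨h1, h2, ?_⟩⟩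
            calc ((G.neighborFinset v0) ∩ s).card ≤ (G.neighborFinset v0).card :=
                  Finset.card_le_card Finset.inter_subset_left
              _ = Δ := by rw [G.card_neighborFinset_eq_degree, hreg v0]
          · by_contra hcon
            obtain ⟨x, hx, hxa, hxb⟩ := hthird
            have hbig : ∀ v ∈ s, v ≠ a → v ≠ b → Δ ≤ ((G.neighborFinset v) ∩ s).card := by
              intro v hvs hva hvb
              by_contra hslt
              push_neg at hslt
              exact hcon ⟨v, hvs, hva, hvb, Or.inl hslt⟩
            have hcl2 : ∀ v ∈ s, v ≠ a → v ≠ b → G.neighborFinset v ⊆ s := fun v hvs hva hvb =>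
              all_nbrs_subset_of_card (hdegle v) (hbig v hvs hva hvb)
            have hxmem : x ∈ Set.univ \ ({a, b} : Set V) := by
              refine ⟨trivial, fun hmem => ?_⟩
              rcases hmem with h | h
              · exact hxa h
              · exact hxb h
            have hrt : RT G (Set.univ \ {a, b}) x v0 := h5 hxmem hv0ab
            have hv0U : v0 ∈ {z : V | z ∈ s ∧ z ≠ a ∧ z ≠ b} := by
              refine RT.closure hrt ⟨hx, hxa, hxb⟩ ?_
              intro u hu z hadj hz
              have hzs : z ∈ s := hcl2 u hu.1 hu.2.1 hu.2.2 ((G.mem_neighborFinset u z).mpr hadj)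
              have hza : z ≠ a := fun h => hz.2 (Or.inl h)
              have hzb : z ≠ b := fun h => hz.2 (Or.inr h)
              exact ⟨hzs, hza, hzb⟩
            exact hv0 hv0U.1
        obtain ⟨c, hc1, hc2, _⟩ := greedyB (G := G) Δ (by omega) a b h4 h3 H
          Finset.univ (Finset.mem_univ a) (Finset.mem_univ b)
        exact colorable_of_bound Δ c (fun v => hc1 v (Finset.mem_univ v))
          (fun u v hadj => hc2 u (Finset.mem_univ u) v (Finset.mem_univ v) hadj)
      · push_neg at hcut
        obtain ⟨w, hw⟩ := hcut
        exact colorable_of_cutvertex hconn Δ (by omega) hdegle hw
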